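/- Let k be a field, H a Hopf algebra over k, and R a universal R-matrix on H. Then (S⊗id)(R)·R = 1 = R·(S⊗id)(R), i.e. (S⊗id)(R) = R⁻¹ in the algebra H⊗H, and moreover (S⊗S)(R) = R, where S⊗id and S⊗S denote the linear maps of H⊗H induced by applying the antipode to the indicated tensor factors. -/

import Mathlib

open scoped TensorProduct

noncomputable section

variable (k H : Type*) [Field k] [Ring H] [HopfAlgebra k H]

/-- The comultiplication as an algebra map. -/
abbrev Δ : H →ₐ[k] H ⊗[k] H := Bialgebra.comulAlgHom k H

/-- The flip `x ⊗ y ↦ y ⊗ x` of the tensor square, as an algebra map. -/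
abbrev τ : H ⊗[k] H →ₐ[k] H ⊗[k] H := (Algebra.TensorProduct.comm k H H).toAlgHom

/-- `x ⊗ y ↦ x ⊗ y ⊗ 1`. -/
abbrev ι₁₂ : H ⊗[k] H →ₐ[k] H ⊗[k] (H ⊗[k] H) :=
  Algebra.TensorProduct.map (AlgHom.id k H) Algebra.TensorProduct.includeLeft

/-- `x ⊗ y ↦ x ⊗ 1 ⊗ y`. -/
abbrev ι₁₃ : H ⊗[k] H →ₐ[k] H ⊗[k] (H ⊗[k] H) :=
  Algebra.TensorProduct.map (AlgHom.id k H) Algebra.TensorProduct.includeRight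

/-- `x ⊗ y ↦ 1 ⊗ x ⊗ y`. -/
abbrev ι₂₃ : H ⊗[k] H →ₐ[k] H ⊗[k] (H ⊗[k] H) :=
  Algebra.TensorProduct.includeRight

/-- `id ⊗ Δ`. -/
abbrev idΔ : H ⊗[k] H →ₐ[k] H ⊗[k] (H ⊗[k] H) :=
  Algebra.TensorProduct.map (AlgHom.id k H) (Bialgebra.comulAlgHom k H)

/-- `Δ ⊗ id` (re-associated to land in `H ⊗ (H ⊗ H)`). -/
abbrev Δid : H ⊗[k] H →ₐ[k] H ⊗[k] (H ⊗[k] H) :=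
  (Algebra.TensorProduct.assoc k k k H H H).toAlgHom.comp
    (Algebra.TensorProduct.map (Bialgebra.comulAlgHom k H) (AlgHom.id k H))

/-- `R` is a universal R-matrix (quasitriangular structure) on `H`. -/
def IsUnivRMatrix (R : H ⊗[k] H) : Prop :=
  IsUnit R ∧
  (∀ h : H, R * τ k H (Δ k H h) = Δ k H h * R) ∧
  idΔ k H R = ι₁₃ k H R * ι₁₂ k H R ∧
  Δid k H R = ι₁₃ k H R * ι₂₃ k H R

/-- `ε ⊗ id : H ⊗ H → H`, `x ⊗ y ↦ ε(x)·y`. -/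
abbrev εid : H ⊗[k] H →ₐ[k] H :=
  (Algebra.TensorProduct.lid k H).toAlgHom.comp
    (Algebra.TensorProduct.map (Bialgebra.counitAlgHom k H) (AlgHom.id k H))

/-- `id ⊗ ε : H ⊗ H → H`, `x ⊗ y ↦ ε(y)·x`. -/
abbrev idε : H ⊗[k] H →ₐ[k] H :=
  ((Algebra.TensorProduct.rid k k H).toAlgHom.restrictScalars k).comp
    (Algebra.TensorProduct.map (AlgHom.id k H) (Bialgebra.counitAlgHom k H))

/-- `S ⊗ id : H ⊗ H → H ⊗ H`. -/
abbrev Sid : H ⊗[k] H →ₗ[k] H ⊗[k] H :=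
  LinearMap.rTensor H (HopfAlgebra.antipode (R := k))

/-- `S ⊗ S : H ⊗ H → H ⊗ H`. -/
abbrev SS : H ⊗[k] H →ₗ[k] H ⊗[k] H :=
  TensorProduct.map (HopfAlgebra.antipode (R := k)) (HopfAlgebra.antipode (R := k))

/-- The Markov element `u = μ((S ⊗ id)(τ(R)))` of a bivector `R`. -/
def markov (R : H ⊗[k] H) : H :=
  LinearMap.mul' k H (Sid k H ((TensorProduct.comm k H H) R))

/-- `(id ⊗ l)(R)` : applying a linear functional to the second tensor factor. -/
def evR (l : H →ₗ[k] k) : H ⊗[k] H →ₗ[k] H :=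
  (TensorProduct.rid k H).toLinearMap ∘ₗ LinearMap.lTensor H l

/-- `(l ⊗ id)(R)` : applying a linear functional to the first tensor factor. -/
def evL (l : H →ₗ[k] k) : H ⊗[k] H →ₗ[k] H :=
  (TensorProduct.lid k H).toLinearMap ∘ₗ LinearMap.rTensor H l

/-- The subspace `H_l = {(id ⊗ l)(R) : l ∈ H*}`. -/
def Hl (R : H ⊗[k] H) : Set H := Set.range fun l : H →ₗ[k] k => evR k H l R

/-- The subspace `H_r = {(l ⊗ id)(R) : l ∈ H*}`. -/
def Hr (R : H ⊗[k] H) : Set H := Set.range fun l : H →ₗ[k] k => evL k H l R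

/-- `H` is cocommutative: `τ ∘ Δ = Δ`. -/
def IsCocomm : Prop :=
  ∀ x : H, (TensorProduct.comm k H H) (Coalgebra.comul (R := k) x) = Coalgebra.comul x

/-- The adjoint action `x ↦ x^h = Σ h₍₁₎ · x · S(h₍₂₎)` of `h`, as an endomorphism of `H`. -/
def adEnd (h : H) : H →ₗ[k] H :=
  TensorProduct.lift
    (LinearMap.mk₂ k
      (fun a b => LinearMap.mulRight k (HopfAlgebra.antipode (R := k) b) ∘ₗ
        LinearMap.mulLeft k a)
      (fun a a' b => by ext x; simp [add_mul])
      (fun c a b => by ext x; simp [smul_mul_assoc])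
      (fun a b b' => by ext x; simp [mul_add])
      (fun c a b => by ext x; simp [mul_smul_comm]))
    (Coalgebra.comul h)


/-! ### Auxiliary material for the proof -/

section Aux

local notation "S'" => HopfAlgebra.antipode (R := k) (A := H)

/-- `x ⊗ (y ⊗ z) ↦ (S x * y) ⊗ z`. -/
def Tm : H ⊗[k] (H ⊗[k] H) →ₗ[k] H ⊗[k] H :=
  (LinearMap.rTensor H ((LinearMap.mul' k H) ∘ₗ LinearMap.rTensor H S')) ∘ₗ
    (TensorProduct.assoc k H H H).symm.toLinearMap

/-- `x ⊗ (y ⊗ z) ↦ (x * S y) ⊗ z`. -/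
def Tm' : H ⊗[k] (H ⊗[k] H) →ₗ[k] H ⊗[k] H :=
  (LinearMap.rTensor H ((LinearMap.mul' k H) ∘ₗ LinearMap.lTensor H S')) ∘ₗ
    (TensorProduct.assoc k H H H).symm.toLinearMap

/-- `x ⊗ (y ⊗ z) ↦ x ⊗ (y * S z)`. -/
def Wm : H ⊗[k] (H ⊗[k] H) →ₗ[k] H ⊗[k] H :=
  LinearMap.lTensor H ((LinearMap.mul' k H) ∘ₗ LinearMap.lTensor H S')

@[simp] lemma Tm_tmul (x y z : H) :
    Tm k H (x ⊗ₜ[k] (y ⊗ₜ[k] z)) = (S' x * y) ⊗ₜ[k] z := by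
  simp [Tm]

@[simp] lemma Tm'_tmul (x y z : H) :
    Tm' k H (x ⊗ₜ[k] (y ⊗ₜ[k] z)) = (x * S' y) ⊗ₜ[k] z := by
  simp [Tm']

@[simp] lemma Wm_tmul (x y z : H) :
    Wm k H (x ⊗ₜ[k] (y ⊗ₜ[k] z)) = x ⊗ₜ[k] (y * S' z) := by
  simp [Wm]

lemma algAssoc_eq (v : (H ⊗[k] H) ⊗[k] H) :
    Algebra.TensorProduct.assoc k k k H H H v = TensorProduct.assoc k H H H v := rfl

@[simp] lemma εid_tmul (x y : H) :
    εid k H (x ⊗ₜ[k] y) = Coalgebra.counit (R := k) x • y := by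
  simp

@[simp] lemma idε_tmul (x y : H) :
    idε k H (x ⊗ₜ[k] y) = Coalgebra.counit (R := k) y • x := by
  simp

lemma counit_antipode (a : H) :
    Coalgebra.counit (R := k) (S' a) = Coalgebra.counit (R := k) a := by
  have h1 : (Coalgebra.counit (R := k) (A := H))
      (LinearMap.mul' k H (LinearMap.rTensor H S' (Coalgebra.comul (R := k) a)))
      = Coalgebra.counit (R := k) a := by
    rw [HopfAlgebra.mul_antipode_rTensor_comul_apply]
    simp [Algebra.algebraMap_eq_smul_one]
  have key : ∀ u : H ⊗[k] H,
      (Coalgebra.counit (R := k) (A := H))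
        (LinearMap.mul' k H (LinearMap.rTensor H S' u))
      = Coalgebra.counit (R := k)
          (S' ((TensorProduct.rid k H)
            (LinearMap.lTensor H (Coalgebra.counit (R := k)) u))) := by
    intro u
    induction u using TensorProduct.induction_on with
    | zero => simp
    | tmul x y =>
        simp only [LinearMap.rTensor_tmul, LinearMap.mul'_apply,
          LinearMap.lTensor_tmul, TensorProduct.rid_tmul, map_smul,
          smul_eq_mul, Bialgebra.counit_mul]
        exact mul_comm _ _
    | add u v hu hv => simp [map_add, hu, hv]
  have h2 := key (Coalgebra.comul (R := k) a)
  rw [Coalgebra.lTensor_counit_comul] at h2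
  simp only [TensorProduct.rid_tmul, one_smul] at h2
  rw [← h2, h1]

lemma L1 (u v : H ⊗[k] H) :
    Tm k H (ι₁₃ k H u * ι₂₃ k H v) = Sid k H u * v := by
  induction u using TensorProduct.induction_on with
  | zero => simp
  | tmul x y =>
      induction v using TensorProduct.induction_on with
      | zero => simp
      | tmul a b =>
          simp [Algebra.TensorProduct.tmul_mul_tmul]
      | add v w hv hw => simp only [map_add, mul_add, hv, hw]
  | add u w hu hw => simp only [map_add, add_mul, hu, hw]

lemma L2 (u v : H ⊗[k] H) :
    Tm' k H (ι₁₃ k H u * ι₂₃ k H v) = u * Sid k H v := by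
  induction u using TensorProduct.induction_on with
  | zero => simp
  | tmul x y =>
      induction v using TensorProduct.induction_on with
      | zero => simp
      | tmul a b =>
          simp [Algebra.TensorProduct.tmul_mul_tmul]
      | add v w hv hw => simp only [map_add, mul_add, hv, hw]
  | add u w hu hw => simp only [map_add, add_mul, hu, hw]

lemma L3 (u v : H ⊗[k] H) :
    Wm k H (ι₁₂ k H u * ι₁₃ k H v) = u * LinearMap.lTensor H S' v := by
  induction u using TensorProduct.induction_on with
  | zero => simp
  | tmul x y =>
      induction v using TensorProduct.induction_on with
      | zero => simp
      | tmul a b =>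
          simp [Algebra.TensorProduct.tmul_mul_tmul]
      | add v w hv hw => simp only [map_add, mul_add, hv, hw]
  | add u w hu hw => simp only [map_add, add_mul, hu, hw]

lemma M1 (w : H ⊗[k] H) :
    Tm k H (Δid k H w) = 1 ⊗ₜ[k] εid k H w := by
  induction w using TensorProduct.induction_on with
  | zero => simp
  | tmul x y =>
      have : Tm k H (Δid k H (x ⊗ₜ[k] y))
          = (LinearMap.mul' k H (LinearMap.rTensor H S'
              (Coalgebra.comul (R := k) x))) ⊗ₜ[k] y := by
        simp only [Δid, AlgHom.coe_comp, Function.comp_apply,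
          Algebra.TensorProduct.map_tmul, AlgHom.coe_id, id_eq,
          Bialgebra.comulAlgHom_apply, AlgEquiv.toAlgHom_eq_coe, AlgHom.coe_coe,
          algAssoc_eq, Tm, LinearMap.coe_comp, LinearEquiv.coe_coe,
          LinearEquiv.symm_apply_apply, LinearMap.rTensor_tmul]
        change (LinearMap.rTensor H _) ((TensorProduct.assoc k H H H).symm
          (TensorProduct.assoc k H H H (Coalgebra.comul (R := k) x ⊗ₜ[k] y))) = _
        rw [LinearEquiv.symm_apply_apply, LinearMap.rTensor_tmul]
        rfl
      rw [this, HopfAlgebra.mul_antipode_rTensor_comul_apply]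
      simp [Algebra.algebraMap_eq_smul_one, TensorProduct.smul_tmul]
  | add u v hu hv => simp only [map_add, hu, hv, TensorProduct.tmul_add]

lemma M2 (w : H ⊗[k] H) :
    Tm' k H (Δid k H w) = 1 ⊗ₜ[k] εid k H w := by
  induction w using TensorProduct.induction_on with
  | zero => simp
  | tmul x y =>
      have : Tm' k H (Δid k H (x ⊗ₜ[k] y))
          = (LinearMap.mul' k H (LinearMap.lTensor H S'
              (Coalgebra.comul (R := k) x))) ⊗ₜ[k] y := by
        simp only [Δid, AlgHom.coe_comp, Function.comp_apply,
          Algebra.TensorProduct.map_tmul, AlgHom.coe_id, id_eq,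
          Bialgebra.comulAlgHom_apply, AlgEquiv.toAlgHom_eq_coe, AlgHom.coe_coe,
          algAssoc_eq, Tm', LinearMap.coe_comp, LinearEquiv.coe_coe,
          LinearEquiv.symm_apply_apply, LinearMap.rTensor_tmul]
        change (LinearMap.rTensor H _) ((TensorProduct.assoc k H H H).symm
          (TensorProduct.assoc k H H H (Coalgebra.comul (R := k) x ⊗ₜ[k] y))) = _
        rw [LinearEquiv.symm_apply_apply, LinearMap.rTensor_tmul]
        rfl
      rw [this, HopfAlgebra.mul_antipode_lTensor_comul_apply]
      simp [Algebra.algebraMap_eq_smul_one, TensorProduct.smul_tmul]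
  | add u v hu hv => simp only [map_add, hu, hv, TensorProduct.tmul_add]

lemma M3 (w : H ⊗[k] H) :
    Wm k H (idΔ k H w) = idε k H w ⊗ₜ[k] 1 := by
  induction w using TensorProduct.induction_on with
  | zero => simp
  | tmul x y =>
      have : Wm k H (idΔ k H (x ⊗ₜ[k] y))
          = x ⊗ₜ[k] (LinearMap.mul' k H (LinearMap.lTensor H S'
              (Coalgebra.comul (R := k) y))) := by
        simp only [idΔ, Algebra.TensorProduct.map_tmul, AlgHom.coe_id, id_eq,
          Bialgebra.comulAlgHom_apply, Wm, LinearMap.lTensor_tmul,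
          LinearMap.coe_comp, Function.comp_apply]
      rw [this, HopfAlgebra.mul_antipode_lTensor_comul_apply]
      simp [Algebra.algebraMap_eq_smul_one, TensorProduct.smul_tmul]
  | add u v hu hv => simp only [map_add, hu, hv, TensorProduct.add_tmul]

lemma P1 (w : H ⊗[k] H) : εid k H (Sid k H w) = εid k H w := by
  induction w using TensorProduct.induction_on with
  | zero => simp
  | tmul x y => simp [counit_antipode]
  | add u v hu hv => simp only [map_add, hu, hv]

lemma P2 (w : H ⊗[k] H) :
    idε k H (LinearMap.lTensor H S' w) = idε k H w := by
  induction w using TensorProduct.induction_on with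
  | zero => simp
  | tmul x y => simp [counit_antipode]
  | add u v hu hv => simp only [map_add, hu, hv]

end Aux

/-- If `R` is a universal R-matrix on a Hopf algebra `H` over a field `k`, then
`(S ⊗ id)(R)` is a (two-sided) inverse of `R`, and `(S ⊗ S)(R) = R`. -/
theorem antipode_apply_univRMatrix {k H : Type*} [Field k] [Ring H] [HopfAlgebra k H]
    (R : H ⊗[k] H) (hR : IsUnivRMatrix k H R) :
    Sid k H R * R = 1 ∧ R * Sid k H R = 1 ∧ SS k H R = R := by
  obtain ⟨hu, -, h2, h3⟩ := hR
  have e1 : Sid k H R * R = 1 ⊗ₜ[k] εid k H R := by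
    rw [← L1, ← h3, M1]
  have e2 : R * Sid k H R = 1 ⊗ₜ[k] εid k H R := by
    rw [← L2, ← h3, M2]
  have hεunit : IsUnit (εid k H R) := hu.map (εid k H)
  have hsq : εid k H R * εid k H R = εid k H R := by
    have h := congrArg (εid k H) e1
    rw [map_mul, P1] at h
    simpa using h
  have hε : εid k H R = 1 :=
    hεunit.mul_left_cancel (by rw [mul_one]; exact hsq)
  have part1 : Sid k H R * R = 1 := by
    rw [e1, hε]; exact (Algebra.TensorProduct.one_def).symm
  have part2 : R * Sid k H R = 1 := by
    rw [e2, hε]; exact (Algebra.TensorProduct.one_def).symm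
  have hQunit : IsUnit (Sid k H R) := ⟨⟨Sid k H R, R, part1, part2⟩, rfl⟩
  have hQX : idΔ k H (Sid k H R) * (ι₁₃ k H R * ι₁₂ k H R) = 1 := by
    rw [← h2, ← map_mul, part1, map_one]
  have hXY : (ι₁₃ k H R * ι₁₂ k H R) *
      (ι₁₂ k H (Sid k H R) * ι₁₃ k H (Sid k H R)) = 1 := by
    rw [mul_assoc, ← mul_assoc (ι₁₂ k H R), ← map_mul, part2, map_one, one_mul,
      ← map_mul, part2, map_one]
  have hQY : idΔ k H (Sid k H R)
      = ι₁₂ k H (Sid k H R) * ι₁₃ k H (Sid k H R) := by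
    calc idΔ k H (Sid k H R)
        = idΔ k H (Sid k H R) * ((ι₁₃ k H R * ι₁₂ k H R) *
            (ι₁₂ k H (Sid k H R) * ι₁₃ k H (Sid k H R))) := by
          rw [hXY, mul_one]
      _ = (idΔ k H (Sid k H R) * (ι₁₃ k H R * ι₁₂ k H R)) *
            (ι₁₂ k H (Sid k H R) * ι₁₃ k H (Sid k H R)) :=
          (mul_assoc _ _ _).symm
      _ = ι₁₂ k H (Sid k H R) * ι₁₃ k H (Sid k H R) := by
          rw [hQX, one_mul]
  have e3 : Sid k H R *
      LinearMap.lTensor H (HopfAlgebra.antipode (R := k)) (Sid k H R)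
      = idε k H (Sid k H R) ⊗ₜ[k] 1 := by
    rw [← L3, ← hQY, M3]
  have hsq2 : idε k H (Sid k H R) * idε k H (Sid k H R)
      = idε k H (Sid k H R) := by
    have h := congrArg (idε k H) e3
    rw [map_mul, P2] at h
    simpa using h
  have hidεQ : idε k H (Sid k H R) = 1 :=
    (hQunit.map (idε k H)).mul_left_cancel (by rw [mul_one]; exact hsq2)
  have e3' : Sid k H R *
      LinearMap.lTensor H (HopfAlgebra.antipode (R := k)) (Sid k H R) = 1 := by
    rw [e3, hidεQ]; exact (Algebra.TensorProduct.one_def).symm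
  have hfin : LinearMap.lTensor H (HopfAlgebra.antipode (R := k)) (Sid k H R)
      = R := by
    calc LinearMap.lTensor H (HopfAlgebra.antipode (R := k)) (Sid k H R)
        = 1 * LinearMap.lTensor H (HopfAlgebra.antipode (R := k)) (Sid k H R) :=
          (one_mul _).symm
      _ = (R * Sid k H R) *
            LinearMap.lTensor H (HopfAlgebra.antipode (R := k)) (Sid k H R) := by
          rw [part2]
      _ = R * (Sid k H R *
            LinearMap.lTensor H (HopfAlgebra.antipode (R := k)) (Sid k H R)) :=
          mul_assoc _ _ _
      _ = R * 1 := by rw [e3']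
      _ = R := mul_one R
  refine ⟨part1, part2, ?_⟩
  have hSS : SS k H R
      = LinearMap.lTensor H (HopfAlgebra.antipode (R := k)) (Sid k H R) := by
    show TensorProduct.map (HopfAlgebra.antipode (R := k))
      (HopfAlgebra.antipode (R := k)) R = _
    rw [← LinearMap.lTensor_comp_rTensor]
    rfl
  rw [hSS, hfin]

end
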